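/- Let h : ℝⁿ → ℝ ∪ {+∞} be a proper convex function whose domain H := {x : h(x) < +∞} is compact with diameter D_h := sup{‖z − z'‖ : z, z' ∈ H}, and suppose h is M_h-Lipschitz continuous on H. Let A : ℝⁿ → ℝˡ be a nonzero linear map and suppose there exists z̄ in the interior of H with A z̄ = b; set d̄ := dist(z̄, ∂H). Let ν > 0 be such that ν‖q'‖ ≤ ‖A*q'‖ for every q' in the range of A, and let R ≥ 0. Let sequences {z_k}_{k≥1} ⊂ H, {c_k}_{k≥1} ⊂ (0, ∞), {p_k}_{k≥0} ⊂ ℝˡ, and {r_k}_{k≥1} ⊂ ℝⁿ satisfy p_0 = 0, p_k = p_{k−1} + c_k(A z_k − b), r_k − A*p_k ∈ ∂h(z_k), and ‖r_k‖ ≤ R for all k ≥ 1. Then ‖p_k‖ ≤ 2 D_h (M_h + R)/(d̄ ν) for all k ≥ 0. -/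

import Mathlib

set_option maxHeartbeats 1000000


open scoped RealInnerProductSpace

/-- Boundedness of the Lagrange multiplier sequence: with `h` proper
convex (modeled as `EReal`-valued, never `⊥`), compact domain `H := {x | h x < ⊤}`,
`M`-Lipschitz on `H`; `A` nonzero linear with a Slater point `z̄ ∈ interior H`,
`A z̄ = b`, `d̄ := dist(z̄, ∂H)`; `ν > 0` with `ν‖q'‖ ≤ ‖A*q'‖` on the range of `A`;
and `R ≥ 0`.  If the sequences satisfy `p₀ = 0`, `p_k = p_{k−1} + c_k(A z_k − b)`,
`r_k − A* p_k ∈ ∂h(z_k)` and `‖r_k‖ ≤ R` for `k ≥ 1` (with `z_k ∈ H`, `c_k > 0`), then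
`‖p_k‖ ≤ 2 D_h (M + R)/(d̄ ν)` for all `k ≥ 0`. -/
theorem stmt6 {n l : ℕ} (h : EuclideanSpace ℝ (Fin n) → EReal)
    (hbot : ∀ x, h x ≠ ⊥)
    (hconv : ∀ x y : EuclideanSpace ℝ (Fin n), ∀ a b : ℝ, 0 ≤ a → 0 ≤ b → a + b = 1 →
      h (a • x + b • y) ≤ (a : EReal) * h x + (b : EReal) * h y)
    (H : Set (EuclideanSpace ℝ (Fin n))) (hH : H = {x | h x < ⊤})
    (hne : H.Nonempty)
    (hcompact : IsCompact H)
    (M : ℝ)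
    (hlip : ∀ x ∈ H, ∀ y ∈ H, h x ≤ h y + ((M * ‖x - y‖ : ℝ) : EReal))
    (A : EuclideanSpace ℝ (Fin n) →ₗ[ℝ] EuclideanSpace ℝ (Fin l))
    (hA : A ≠ 0) (b : EuclideanSpace ℝ (Fin l))
    (zbar : EuclideanSpace ℝ (Fin n)) (hzbar : zbar ∈ interior H) (hAzbar : A zbar = b)
    (ν : ℝ) (hν : 0 < ν)
    (hνA : ∀ q' ∈ LinearMap.range A, ν * ‖q'‖ ≤ ‖LinearMap.adjoint A q'‖)
    (R : ℝ) (hR : 0 ≤ R)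
    (z : ℕ → EuclideanSpace ℝ (Fin n)) (c : ℕ → ℝ)
    (p : ℕ → EuclideanSpace ℝ (Fin l)) (r : ℕ → EuclideanSpace ℝ (Fin n))
    (hp0 : p 0 = 0)
    (hzH : ∀ k, 1 ≤ k → z k ∈ H)
    (hc : ∀ k, 1 ≤ k → 0 < c k)
    (hpk : ∀ k, 1 ≤ k → p k = p (k - 1) + c k • (A (z k) - b))
    (hsub : ∀ k, 1 ≤ k → ∀ z',
      h (z k) + ((⟪r k - LinearMap.adjoint A (p k), z' - z k⟫ : ℝ) : EReal) ≤ h z')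
    (hrR : ∀ k, 1 ≤ k → ‖r k‖ ≤ R) :
    ∀ k : ℕ, ‖p k‖ ≤ 2 * Metric.diam H * (M + R) / (Metric.infDist zbar (frontier H) * ν) := by
  have hzbarH : zbar ∈ H := interior_subset hzbar
  -- n ≠ 0
  have hn : n ≠ 0 := by
    rintro rfl
    apply hA
    ext x
    have hx : x = 0 := by ext i; exact Fin.elim0 i
    simp [hx]
  haveI : Nontrivial (EuclideanSpace ℝ (Fin n)) := by
    refine ⟨EuclideanSpace.single ⟨0, Nat.pos_of_ne_zero hn⟩ 1, 0, fun hcon => ?_⟩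
    have h1 : ‖EuclideanSpace.single (⟨0, Nat.pos_of_ne_zero hn⟩ : Fin n) (1:ℝ)‖ = 1 := by
      rw [EuclideanSpace.norm_single]; simp
    rw [hcon] at h1
    simp at h1
  -- frontier nonempty
  have hfr : (frontier H).Nonempty := by
    rw [Set.nonempty_iff_ne_empty]
    intro he
    rcases frontier_eq_empty_iff.mp he with h1 | h2
    · exact hne.ne_empty h1
    · exact hcompact.ne_univ h2
  set d := Metric.infDist zbar (frontier H) with hd
  set D := Metric.diam H with hD
  have hdpos : 0 < d := by
    rw [hd, ← isClosed_frontier.notMem_iff_infDist_pos hfr]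
    intro hmem
    exact hmem.2 hzbar
  -- ball zbar d ⊆ H
  have hball : Metric.ball zbar d ⊆ H := by
    have hsub2 : Metric.ball zbar d ⊆ interior H ∪ (closure H)ᶜ := by
      intro x hx
      have hxf : x ∉ frontier H :=
        Set.disjoint_left.mp Metric.disjoint_ball_infDist hx
      by_cases hxc : x ∈ closure H
      · left
        by_contra hxi
        exact hxf ⟨hxc, hxi⟩
      · right; exact hxc
    have hdisj : Disjoint (interior H) (closure H)ᶜ :=
      Set.disjoint_left.mpr fun x hx hx' => hx' (subset_closure (interior_subset hx))
    rcases (convex_ball zbar d).isPreconnected.subset_or_subset isOpen_interior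
        isClosed_closure.isOpen_compl hdisj hsub2 with h1 | h2
    · exact h1.trans interior_subset
    · exact absurd (subset_closure hzbarH) (h2 (Metric.mem_ball_self hdpos))
  -- finiteness of h on H
  have hfin : ∀ x ∈ H, h x = ((h x).toReal : EReal) := by
    intro x hx
    rw [hH] at hx
    exact (EReal.coe_toReal hx.ne (hbot x)).symm
  -- M ≥ 0
  have hM : 0 ≤ M := by
    obtain ⟨ε, hε, hball2⟩ := Metric.isOpen_iff.mp isOpen_interior zbar hzbar
    set u : EuclideanSpace ℝ (Fin n) := EuclideanSpace.single ⟨0, Nat.pos_of_ne_zero hn⟩ 1 with hu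
    have hun : ‖u‖ = 1 := by rw [hu, EuclideanSpace.norm_single]; simp
    set y := zbar + (ε/2) • u with hy
    have hyz : ‖y - zbar‖ = ε/2 := by
      rw [hy]
      rw [show zbar + (ε/2) • u - zbar = (ε/2) • u by abel]
      rw [norm_smul, hun, mul_one]
      exact Real.norm_of_nonneg (by positivity)
    have hyH : y ∈ H := by
      apply interior_subset
      apply hball2
      rw [Metric.mem_ball, dist_eq_norm, hyz]
      linarith
    have h1 := hlip y hyH zbar hzbarH
    have h2 := hlip zbar hzbarH y hyH
    rw [hfin _ hyH, hfin _ hzbarH, ← EReal.coe_add, EReal.coe_le_coe_iff] at h1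
    rw [hfin _ hyH, hfin _ hzbarH, ← EReal.coe_add, EReal.coe_le_coe_iff] at h2
    rw [hyz] at h1
    rw [show ‖zbar - y‖ = ‖y - zbar‖ from (norm_sub_rev _ _), hyz] at h2
    nlinarith
  have hMR : 0 ≤ M + R := by linarith
  have hDnn : 0 ≤ D := Metric.diam_nonneg
  have hBnn : 0 ≤ 2 * D * (M + R) / (d * ν) := by
    apply div_nonneg
    · nlinarith
    · positivity
  -- key inequality
  have key : ∀ k, 1 ≤ k → ∀ z' ∈ H,
      ⟪LinearMap.adjoint A (p k), z k - z'⟫ ≤ (M + R) * D := by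
    intro k hk z' hz'
    have hzk := hzH k hk
    have h1 := hsub k hk z'
    rw [hfin _ hzk, hfin _ hz', ← EReal.coe_add, EReal.coe_le_coe_iff] at h1
    have h2 := hlip z' hz' (z k) hzk
    rw [hfin _ hzk, hfin _ hz', ← EReal.coe_add, EReal.coe_le_coe_iff] at h2
    have hinner : ⟪r k, z' - z k⟫ - ⟪LinearMap.adjoint A (p k), z' - z k⟫ ≤ M * ‖z' - z k‖ := by
      rw [← inner_sub_left]
      linarith
    have hrk : |⟪r k, z' - z k⟫| ≤ R * ‖z' - z k‖ := by
      calc |⟪r k, z' - z k⟫| ≤ ‖r k‖ * ‖z' - z k‖ := abs_real_inner_le_norm _ _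
        _ ≤ R * ‖z' - z k‖ := by
            apply mul_le_mul_of_nonneg_right (hrR k hk) (norm_nonneg _)
    have hdist : ‖z' - z k‖ ≤ D := by
      rw [← dist_eq_norm, hD]
      exact Metric.dist_le_diam_of_mem hcompact.isBounded hz' hzk
    have hflip : ⟪LinearMap.adjoint A (p k), z k - z'⟫
        = - ⟪LinearMap.adjoint A (p k), z' - z k⟫ := by
      rw [← inner_neg_right, neg_sub]
    rw [hflip]
    have habs := abs_le.mp hrk
    nlinarith [norm_nonneg (z' - z k)]
  -- range membership
  have hrange : ∀ k, p k ∈ LinearMap.range A := by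
    intro k
    induction k with
    | zero => rw [hp0]; exact zero_mem _
    | succ k ih =>
      rw [hpk (k+1) (by omega)]
      simp only [Nat.add_sub_cancel]
      refine add_mem ih (Submodule.smul_mem _ _ ?_)
      rw [← hAzbar]
      exact sub_mem (LinearMap.mem_range_self _ _) (LinearMap.mem_range_self _ _)
  -- main induction
  intro k
  induction k with
  | zero =>
    rw [hp0, norm_zero]
    exact hBnn
  | succ k ih =>
    by_cases hcase : ⟪p (k+1), A (z (k+1)) - b⟫ < 0
    · -- norm decreases
      have hpkk := hpk (k+1) (by omega)
      simp only [Nat.add_sub_cancel] at hpkk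
      have h1 : ⟪p (k+1), p (k+1)⟫ ≤ ⟪p (k+1), p k⟫ := by
        have heq : ⟪p (k+1), p (k+1)⟫
            = ⟪p (k+1), p k⟫ + c (k+1) * ⟪p (k+1), A (z (k+1)) - b⟫ := by
          nth_rewrite 2 [hpkk]
          rw [inner_add_right, real_inner_smul_right]
        rw [heq]
        nlinarith [mul_neg_of_pos_of_neg (hc (k+1) (by omega)) hcase]
      have h2 : ‖p (k+1)‖^2 ≤ ‖p (k+1)‖ * ‖p k‖ := by
        rw [← real_inner_self_eq_norm_sq]
        exact h1.trans (real_inner_le_norm _ _)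
      rcases eq_or_lt_of_le (norm_nonneg (p (k+1))) with h0 | hpos
      · rw [← h0]; exact hBnn
      · have hle : ‖p (k+1)‖ ≤ ‖p k‖ := by nlinarith
        linarith
    · push_neg at hcase
      set q := LinearMap.adjoint A (p (k+1)) with hq
      by_cases hq0 : q = 0
      · have hnu := hνA (p (k+1)) (hrange (k+1))
        rw [← hq, hq0, norm_zero] at hnu
        have hp0' : ‖p (k+1)‖ = 0 := by nlinarith [norm_nonneg (p (k+1))]
        rw [hp0']
        exact hBnn
      · have hqn : 0 < ‖q‖ := norm_pos_iff.mpr hq0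
        set w : EuclideanSpace ℝ (Fin n) := ‖q‖⁻¹ • q with hw
        have hwn : ‖w‖ = 1 := by
          rw [hw, norm_smul, norm_inv, norm_norm, inv_mul_cancel₀ (ne_of_gt hqn)]
        set z' := zbar - (d/2) • w with hz'
        have hz'H : z' ∈ H := by
          apply hball
          rw [Metric.mem_ball, dist_eq_norm, hz']
          rw [show zbar - (d/2) • w - zbar = -((d/2) • w) by abel]
          rw [norm_neg, norm_smul, hwn, mul_one, Real.norm_of_nonneg (by positivity)]
          linarith
        have hkey := key (k+1) (by omega) z' hz'H
        have hcomp : ⟪q, z (k+1) - z'⟫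
            = ⟪p (k+1), A (z (k+1)) - b⟫ + (d/2) * ‖q‖ := by
          rw [hq, LinearMap.adjoint_inner_left, map_sub]
          have hz'A : A z' = b - (d/2) • A w := by
            rw [hz', map_sub, map_smul, hAzbar]
          rw [hz'A, show A (z (k+1)) - (b - (d/2) • A w)
              = (A (z (k+1)) - b) + (d/2) • A w by abel]
          rw [inner_add_right, real_inner_smul_right]
          congr 1
          rw [show ⟪p (k+1), A w⟫ = ⟪LinearMap.adjoint A (p (k+1)), w⟫ from
            (LinearMap.adjoint_inner_left A w (p (k+1))).symm]
          rw [← hq, hw, real_inner_smul_right, real_inner_self_eq_norm_sq]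
          field_simp
        rw [hcomp] at hkey
        have hfinal : (d/2) * ‖q‖ ≤ (M+R) * D := by linarith
        have hnu := hνA (p (k+1)) (hrange (k+1))
        rw [← hq] at hnu
        rw [le_div_iff₀ (by positivity : (0:ℝ) < d * ν)]
        nlinarith [mul_le_mul_of_nonneg_left hnu hdpos.le, hfinal]
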